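/- arXiv:2211.05491 — 3 statements merged into one kernel-verified Lean document; each statement's English description precedes it below -/
import Mathlib

section
/- Let d ≥ 1, let ρ₀, ρ₁ be quantum states on ℂ^d, and define the hybrid states ρ'₀ = (I₂/2) ⊗ ρ₀ and ρ'₁ = (1/2)·Σ_{b∈{0,1}} |b⟩⟨b| ⊗ ρ_b on ℂ² ⊗ ℂ^d. If there exists a matrix O' on ℂ² ⊗ ℂ^d with 0 ≤ O' ≤ I such that Tr[O'(ρ'₁ − ρ'₀)] = ε with ε ≥ 0, then there exists a matrix O on ℂ^d with 0 ≤ O ≤ I such that Tr[O(ρ₁ − ρ₀)] ≥ ε/2. -/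
open Matrix BigOperators Kronecker
open scoped ComplexOrder

noncomputable section

/-- The projector `|b⟩⟨b|` on `ℂ²`. -/
def proj (b : Fin 2) : Matrix (Fin 2) (Fin 2) ℂ := Matrix.single b b 1

/-- If there is a distinguisher `O'` with advantage `ε ≥ 0` against the
hybrid states `ρ'₀ = (I₂/2) ⊗ ρ₀` and `ρ'₁ = (1/2)·Σ_b |b⟩⟨b| ⊗ ρ_b`, then there is a
distinguisher `O` with advantage at least `ε/2` against `ρ₀, ρ₁`. -/
theorem hybrid_distinguisher
    (d : ℕ) (hd : 1 ≤ d)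
    (ρ₀ ρ₁ : Matrix (Fin d) (Fin d) ℂ)
    (hρ₀ : ρ₀.PosSemidef) (hρ₀t : ρ₀.trace = 1)
    (hρ₁ : ρ₁.PosSemidef) (hρ₁t : ρ₁.trace = 1)
    (ε : ℝ) (hε : 0 ≤ ε)
    (hO' : ∃ O' : Matrix (Fin 2 × Fin d) (Fin 2 × Fin d) ℂ,
      O'.PosSemidef ∧ (1 - O').PosSemidef ∧
      (O' * (((1/2 : ℂ) • (proj 0 ⊗ₖ ρ₀ + proj 1 ⊗ₖ ρ₁)) -
             ((1/2 : ℂ) • ((1 : Matrix (Fin 2) (Fin 2) ℂ) ⊗ₖ ρ₀)))).trace = (ε : ℂ)) :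
    ∃ O : Matrix (Fin d) (Fin d) ℂ,
      O.PosSemidef ∧ (1 - O).PosSemidef ∧
      ε / 2 ≤ ((O * (ρ₁ - ρ₀)).trace).re := by
  obtain ⟨O', hpsd, hle, htr⟩ := hO'
  set e : Fin d → Fin 2 × Fin d := fun i => (1, i) with he
  have hinj : Function.Injective e := fun i j h => (Prod.mk.injEq _ _ _ _ ▸ h).2
  refine ⟨O'.submatrix e e, hpsd.submatrix e, ?_, ?_⟩
  · have : (1 : Matrix (Fin d) (Fin d) ℂ) - O'.submatrix e e
        = (1 - O').submatrix e e := by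
      ext i j
      by_cases h : i = j <;>
        simp [Matrix.submatrix_apply, Matrix.one_apply, h, he, Prod.ext_iff]
    rw [this]
    exact hle.submatrix e
  · -- compute the trace
    have hone : (1 : Matrix (Fin 2) (Fin 2) ℂ) = proj 0 + proj 1 := by
      ext i j
      fin_cases i <;> fin_cases j <;>
        simp [proj, Matrix.single, Matrix.one_apply]
    have hX : ((1/2 : ℂ) • (proj 0 ⊗ₖ ρ₀ + proj 1 ⊗ₖ ρ₁)) -
             ((1/2 : ℂ) • ((1 : Matrix (Fin 2) (Fin 2) ℂ) ⊗ₖ ρ₀))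
        = (1/2 : ℂ) • (proj 1 ⊗ₖ (ρ₁ - ρ₀)) := by
      rw [hone, ← smul_sub]
      congr 1
      rw [Matrix.add_kronecker]
      ext ⟨b, i⟩ ⟨c, j⟩
      simp [Matrix.kroneckerMap_apply, Matrix.sub_apply, Matrix.add_apply]
      ring
    have h2 : (O' * (proj 1 ⊗ₖ (ρ₁ - ρ₀))).trace
        = ((O'.submatrix e e) * (ρ₁ - ρ₀)).trace := by
      simp [Matrix.trace, Matrix.mul_apply, Matrix.kroneckerMap_apply, proj,
        Matrix.single, Fintype.sum_prod_type, Fin.sum_univ_two,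
        Matrix.submatrix_apply, he, Fin.ext_iff]
    have key : ((O'.submatrix e e) * (ρ₁ - ρ₀)).trace = 2 * (ε : ℂ) := by
      rw [hX] at htr
      rw [Matrix.mul_smul, Matrix.trace_smul, h2] at htr
      have := htr
      rw [smul_eq_mul] at this
      field_simp at this ⊢
      linear_combination this
    have : (((O'.submatrix e e) * (ρ₁ - ρ₀)).trace).re = 2 * ε := by
      rw [key]; simp
    rw [this]; linarith
end
end

section
/- (Quantum Goldreich–Levin, Adcock–Cleve.) Let n, m ≥ 1, let x ∈ {0,1}ⁿ, and for each r ∈ {0,1}ⁿ let U_r be a 2^m × 2^m unitary matrix. Define the block-diagonal unitary U = Σ_{r∈{0,1}ⁿ} |r⟩⟨r| ⊗ U_r on ℂ^{2ⁿ} ⊗ ℂ^{2^m}. On n+m+1 qubits, ordered as n input qubits, then m work qubits (the last work qubit being the prediction qubit), then one ancilla qubit, define the unitary R = (H^{⊗n} ⊗ I_{2^{m+1}}) · (U† ⊗ I₂) · (I_{2^{n+m−1}} ⊗ CZ) · (U ⊗ I₂) · (H^{⊗n} ⊗ I_{2^m} ⊗ X), where CZ = diag(1,1,1,−1) acts on the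 prediction qubit and the ancilla. If 2^{−n} Σ_{r∈{0,1}ⁿ} ‖(I_{2^{m−1}} ⊗ ⟨r·x|) U_r |0^m⟩‖² ≥ 1/2 + ε, where the bra ⟨r·x| acts on the prediction qubit and r·x = Σᵢ rᵢxᵢ mod 2, then |(⟨x| ⊗ ⟨0^m| ⊗ ⟨1|) R (|0ⁿ⟩ ⊗ |0^m⟩ ⊗ |0⟩)| ≥ 2ε. -/
open Matrix BigOperators

noncomputable section

namespace QGL

abbrev Bit := ZMod 2

/-- Inner product of bit strings, mod 2. -/
def dot {n : ℕ} (r x : Fin n → Bit) : Bit := ∑ i, r i * x i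

/-- Index set for `n + m + 1` qubits: `n` input qubits, `m` work qubits, one ancilla. -/
abbrev Idx (n m : ℕ) := (Fin n → Bit) × (Fin m → Bit) × Bit

/-- `H^{⊗n} ⊗ I` acting on the first `n` qubits. -/
def hadN (n m : ℕ) : Matrix (Idx n m) (Idx n m) ℂ :=
  Matrix.of fun p q =>
    if p.2 = q.2 then ((-1 : ℂ) ^ (dot p.1 q.1).val) * ((((Real.sqrt 2 : ℝ) : ℂ)) ^ n)⁻¹ else 0

/-- `U ⊗ I₂`, where `U = Σ_r |r⟩⟨r| ⊗ U_r` acts on the input and work qubits. -/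
def Ufull (n m : ℕ) (U : (Fin n → Bit) → Matrix (Fin m → Bit) (Fin m → Bit) ℂ) :
    Matrix (Idx n m) (Idx n m) ℂ :=
  Matrix.of fun p q => if p.1 = q.1 ∧ p.2.2 = q.2.2 then U p.1 p.2.1 q.2.1 else 0

/-- `I ⊗ CZ`, where `CZ = diag(1,1,1,-1)` acts on the prediction qubit
(the last work qubit) and the ancilla. -/
def CZfull (n m : ℕ) (hm : 1 ≤ m) : Matrix (Idx n m) (Idx n m) ℂ :=
  Matrix.of fun p q =>
    if p = q then (if p.2.1 ⟨m - 1, by omega⟩ = 1 ∧ p.2.2 = 1 then -1 else 1) else 0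

/-- `I ⊗ I ⊗ X`, the bit flip on the ancilla qubit. -/
def Xanc (n m : ℕ) : Matrix (Idx n m) (Idx n m) ℂ :=
  Matrix.of fun p q => if p.1 = q.1 ∧ p.2.1 = q.2.1 ∧ p.2.2 = q.2.2 + 1 then 1 else 0

lemma dot_zero {n : ℕ} (r : Fin n → Bit) : dot r (fun _ => 0) = 0 := by simp [dot]

lemma step1 (n m : ℕ) (q : Idx n m) :
    (hadN n m * Xanc n m) q (fun _ => 0, fun _ => 0, 0) =
    if q.2 = ((fun _ => 0 : Fin m → Bit), (1 : Bit)) then ((((Real.sqrt 2 : ℝ) : ℂ)) ^ n)⁻¹ else 0 := by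
  simp [Matrix.mul_apply, hadN, Xanc, Fintype.sum_prod_type, dot_zero, Prod.ext_iff, ite_and]

lemma step2 (n m : ℕ) (U : (Fin n → Bit) → Matrix (Fin m → Bit) (Fin m → Bit) ℂ) (p : Idx n m) :
    (Ufull n m U * (hadN n m * Xanc n m)) p (fun _ => 0, fun _ => 0, 0) =
    if p.2.2 = 1 then U p.1 p.2.1 (fun _ => 0) * ((((Real.sqrt 2 : ℝ) : ℂ)) ^ n)⁻¹ else 0 := by

  rw [Matrix.mul_apply]
  simp only [step1]
  simp [Ufull, Fintype.sum_prod_type, Prod.ext_iff, ite_and]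

lemma step3 (n m : ℕ) (hm : 1 ≤ m) (U : (Fin n → Bit) → Matrix (Fin m → Bit) (Fin m → Bit) ℂ)
    (p : Idx n m) :
    (CZfull n m hm * (Ufull n m U * (hadN n m * Xanc n m))) p (fun _ => 0, fun _ => 0, 0) =
    if p.2.2 = 1 then (if p.2.1 ⟨m - 1, by omega⟩ = 1 then -1 else 1) *
      (U p.1 p.2.1 (fun _ => 0) * ((((Real.sqrt 2 : ℝ) : ℂ)) ^ n)⁻¹) else 0 := by

  rw [Matrix.mul_apply]
  simp only [step2, CZfull, Matrix.of_apply]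
  rw [Finset.sum_eq_single p]
  · by_cases h : p.2.2 = 1 <;> simp [h] <;> by_cases h2 : p.2.1 ⟨m-1, by omega⟩ = 1 <;> simp [h, h2]
  · intro q _ hq; simp [Ne.symm hq]
  · simp

lemma step4 (n m : ℕ) (hm : 1 ≤ m) (U : (Fin n → Bit) → Matrix (Fin m → Bit) (Fin m → Bit) ℂ)
    (p : Idx n m) :
    ((Ufull n m U)ᴴ * (CZfull n m hm * (Ufull n m U * (hadN n m * Xanc n m)))) p
      (fun _ => 0, fun _ => 0, 0) =
    if p.2.2 = 1 then
      (∑ w : Fin m → Bit, (starRingEnd ℂ) (U p.1 w p.2.1) *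
        ((if w ⟨m - 1, by omega⟩ = 1 then -1 else 1) * U p.1 w (fun _ => 0)))
        * ((((Real.sqrt 2 : ℝ) : ℂ)) ^ n)⁻¹ else 0 := by
  rw [Matrix.mul_apply]
  simp only [step3]
  simp only [Matrix.conjTranspose_apply, Ufull, Matrix.of_apply]
  rw [Fintype.sum_prod_type]
  by_cases h : p.2.2 = 1
  · simp only [h, if_true, Fintype.sum_prod_type, ite_and, apply_ite (starRingEnd ℂ),
      Finset.sum_mul, eq_self_iff_true]
    simp [ite_and, apply_ite (starRingEnd ℂ), Finset.sum_mul]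
    rw [Finset.sum_comm]
    refine Finset.sum_congr rfl fun w _ => ?_
    by_cases hA : w ⟨m - 1, by omega⟩ = 1 <;> simp [hA, mul_assoc]
  · simp only [h, if_false]
    refine Finset.sum_eq_zero fun a _ => Finset.sum_eq_zero fun b _ => ?_
    rcases b with ⟨w, c⟩
    by_cases hc : c = 1 <;>
      simp [hc, show ((1:Bit) = p.2.2) ↔ False from ⟨fun hh => h hh.symm, False.elim⟩]

/-- The Adcock–Cleve recovery circuit
`R = (H^{⊗n} ⊗ I)·(U† ⊗ I₂)·(I ⊗ CZ)·(U ⊗ I₂)·(H^{⊗n} ⊗ I_{2^m} ⊗ X)`. -/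
def Rmat (n m : ℕ) (hm : 1 ≤ m)
    (U : (Fin n → Bit) → Matrix (Fin m → Bit) (Fin m → Bit) ℂ) :
    Matrix (Idx n m) (Idx n m) ℂ :=
  hadN n m * (Ufull n m U)ᴴ * CZfull n m hm * Ufull n m U * (hadN n m * Xanc n m)

lemma entry (n m : ℕ) (hm : 1 ≤ m) (x : Fin n → Bit)
    (U : (Fin n → Bit) → Matrix (Fin m → Bit) (Fin m → Bit) ℂ) :
    Rmat n m hm U (x, fun _ => 0, 1) (fun _ => 0, fun _ => 0, 0) =
    (((2 : ℂ)) ^ n)⁻¹ * ∑ s : Fin n → Bit, ∑ w : Fin m → Bit,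
      ((-1 : ℂ) ^ (dot x s).val * (if w ⟨m - 1, by omega⟩ = 1 then -1 else 1)) *
        ((starRingEnd ℂ) (U s w (fun _ => 0)) * U s w (fun _ => 0)) := by
  have hc : ((((Real.sqrt 2 : ℝ) : ℂ)) ^ n)⁻¹ * ((((Real.sqrt 2 : ℝ) : ℂ)) ^ n)⁻¹
      = (((2 : ℂ)) ^ n)⁻¹ := by
    rw [← mul_inv, ← mul_pow, ← Complex.ofReal_mul, Real.mul_self_sqrt (by norm_num)]
    norm_num
  rw [Rmat, Matrix.mul_assoc, Matrix.mul_assoc, Matrix.mul_assoc, Matrix.mul_apply]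
  simp only [step4]
  simp only [hadN, Matrix.of_apply, Fintype.sum_prod_type, Prod.ext_iff, ite_and]
  simp [Finset.mul_sum, Finset.sum_mul]
  refine Finset.sum_congr rfl fun s _ => ?_
  rw [Finset.sum_comm]
  refine Finset.sum_congr rfl fun w _ => ?_
  by_cases hA : w ⟨m - 1, by omega⟩ = 1 <;> simp [hA, eq_comm] <;> rw [← hc] <;> ring

lemma dot_comm {n : ℕ} (r x : Fin n → Bit) : dot r x = dot x r := by
  unfold dot; exact Finset.sum_congr rfl fun i _ => mul_comm _ _

lemma sign_eq (a b : Bit) :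
    ((-1 : ℂ) ^ a.val) * (if b = 1 then (-1 : ℂ) else 1) = if b = a then 1 else -1 := by
  have h : ∀ c : Bit, c = 0 ∨ c = 1 := by decide
  have h10 : (1 : Bit) ≠ 0 := by decide
  have h01 : (0 : Bit) ≠ 1 := by decide
  rcases h a with rfl | rfl <;> rcases h b with rfl | rfl <;> simp [ZMod.val_one, h10, h01] <;> norm_num


/-- Quantum Goldreich–Levin, Adcock–Cleve: if on average over `r` the
prediction qubit of `U_r|0^m⟩` is `(1/2 + ε)`-correlated with `r·x`, then the circuit `R`
recovers `x` with amplitude at least `2ε`. -/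
theorem quantum_goldreich_levin
    (n m : ℕ) (hn : 1 ≤ n) (hm : 1 ≤ m) (x : Fin n → Bit)
    (U : (Fin n → Bit) → Matrix (Fin m → Bit) (Fin m → Bit) ℂ)
    (hU : ∀ r, U r ∈ Matrix.unitaryGroup (Fin m → Bit) ℂ)
    (ε : ℝ)
    (hpred : 1/2 + ε ≤ (((2 : ℝ) ^ n)⁻¹) * ∑ r : Fin n → Bit, ∑ w : Fin m → Bit,
        (if w ⟨m - 1, by omega⟩ = dot r x then Complex.normSq (U r w (fun _ => 0)) else 0)) :
    2 * ε ≤ ‖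
      (Rmat n m hm U (x, fun _ => 0, 1) (fun _ => 0, fun _ => 0, 0))‖ := by
  -- column norms
  have hcol : ∀ s : Fin n → Bit,
      ∑ w : Fin m → Bit, Complex.normSq (U s w (fun _ => 0)) = 1 := by
    intro s
    have h1 : (star (U s) * U s) = 1 := (hU s).1
    have h2 : (star (U s) * U s) (fun _ => 0) (fun _ => 0)
        = (1 : Matrix (Fin m → Bit) (Fin m → Bit) ℂ) (fun _ => 0) (fun _ => 0) := by rw [h1]
    simp [Matrix.mul_apply, Matrix.star_apply, Matrix.one_apply] at h2
    have h3 : ((∑ w : Fin m → Bit, Complex.normSq (U s w (fun _ => 0)) : ℝ) : ℂ) = 1 := by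
      push_cast
      rw [← h2]
      exact Finset.sum_congr rfl fun w _ => by
        rw [Complex.normSq_eq_conj_mul_self]
    exact_mod_cast h3
  set T : ℝ := ∑ r : Fin n → Bit, ∑ w : Fin m → Bit,
      (if w ⟨m - 1, by omega⟩ = dot r x then Complex.normSq (U r w (fun _ => 0)) else 0) with hT
  -- entry is real
  have hent : Rmat n m hm U (x, fun _ => 0, 1) (fun _ => 0, fun _ => 0, 0)
      = ((2 * (((2 : ℝ) ^ n)⁻¹ * T) - 1 : ℝ) : ℂ) := by
    rw [entry]
    have hmain : (∑ s : Fin n → Bit, ∑ w : Fin m → Bit,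
        ((-1 : ℂ) ^ (dot x s).val * (if w ⟨m - 1, by omega⟩ = 1 then -1 else 1)) *
          ((starRingEnd ℂ) (U s w (fun _ => 0)) * U s w (fun _ => 0)))
        = ((2 * T - 2 ^ n : ℝ) : ℂ) := by
      have step : ∀ s : Fin n → Bit, (∑ w : Fin m → Bit,
          ((-1 : ℂ) ^ (dot x s).val * (if w ⟨m - 1, by omega⟩ = 1 then -1 else 1)) *
            ((starRingEnd ℂ) (U s w (fun _ => 0)) * U s w (fun _ => 0)))
          = ((2 * (∑ w : Fin m → Bit, (if w ⟨m - 1, by omega⟩ = dot s x then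
              Complex.normSq (U s w (fun _ => 0)) else 0)) - 1 : ℝ) : ℂ) := by
        intro s
        have : ∀ w : Fin m → Bit,
            ((-1 : ℂ) ^ (dot x s).val * (if w ⟨m - 1, by omega⟩ = 1 then -1 else 1)) *
              ((starRingEnd ℂ) (U s w (fun _ => 0)) * U s w (fun _ => 0))
            = ((2 * (if w ⟨m - 1, by omega⟩ = dot s x then
                Complex.normSq (U s w (fun _ => 0)) else 0)
                - Complex.normSq (U s w (fun _ => 0)) : ℝ) : ℂ) := by
          intro w
          rw [sign_eq, ← Complex.normSq_eq_conj_mul_self, dot_comm x s]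
          by_cases hc : w ⟨m - 1, by omega⟩ = dot s x <;> simp [hc] <;> push_cast <;> ring
        rw [Finset.sum_congr rfl fun w _ => this w, ← Complex.ofReal_sum]
        rw [Finset.sum_sub_distrib, ← Finset.mul_sum, hcol s]
      rw [Finset.sum_congr rfl fun s _ => step s, ← Complex.ofReal_sum]
      rw [Finset.sum_sub_distrib, ← Finset.mul_sum, ← hT]
      simp [Finset.card_univ]
    rw [hmain]
    push_cast
    have h2n : ((2 : ℂ) ^ n) ≠ 0 := pow_ne_zero _ two_ne_zero
    field_simp
  rw [hent]
  have hge : 2 * ε ≤ 2 * (((2 : ℝ) ^ n)⁻¹ * T) - 1 := by nlinarith [hpred]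
  calc 2 * ε ≤ 2 * (((2 : ℝ) ^ n)⁻¹ * T) - 1 := hge
    _ ≤ |2 * (((2 : ℝ) ^ n)⁻¹ * T) - 1| := le_abs_self _
    _ = ‖_‖ := by rw [Complex.norm_real, Real.norm_eq_abs]

end QGL
end
end

section
/- Let (Ω, P) be a probability space, n ≥ 1, and let Γ₁, …, Γₙ be measurable events with Υᵢ = Γ₁ ∩ ⋯ ∩ Γᵢ, Υ₀ = Ω, ε := P(Υₙ) > 0, and αᵢ = P(Γᵢ ∩ Υ_{i−1}) / P(Υ_{i−1}). Then for every real t > 0, if n > 2t·ln(1/ε), at least n/2 of the indices i ∈ [n] satisfy αᵢ > 1 − 1/t; in particular there exists an index i ∈ [n] with αᵢ > 1 − 1/t. -/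
open MeasureTheory BigOperators

/-- with `Υᵢ = Γ₁ ∩ ⋯ ∩ Γᵢ`, `ε = P(Υₙ) > 0` and
`αᵢ = P(Γᵢ ∩ Υ_{i-1}) / P(Υ_{i-1})`, for every `t > 0`, if `n > 2t·ln(1/ε)` then at least
`n/2` of the indices `i ∈ [n]` satisfy `αᵢ > 1 - 1/t`; in particular some index does. -/
theorem estimation_lemma_half {Ω : Type*} [MeasurableSpace Ω]
    (μ : Measure Ω) [IsProbabilityMeasure μ]
    (n : ℕ) (hn : 1 ≤ n)
    (Γ : Fin n → Set Ω) (hΓ : ∀ i, MeasurableSet (Γ i))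
    (ε : ℝ) (hε : ε = (μ (⋂ j : Fin n, Γ j)).toReal) (hεpos : 0 < ε)
    (α : Fin n → ℝ)
    (hα : ∀ i : Fin n, α i =
      (μ (Γ i ∩ ⋂ (j : Fin n) (_ : (j : ℕ) < (i : ℕ)), Γ j)).toReal /
      (μ (⋂ (j : Fin n) (_ : (j : ℕ) < (i : ℕ)), Γ j)).toReal)
    (t : ℝ) (ht : 0 < t)
    (hnt : 2 * t * Real.log (1 / ε) < (n : ℝ)) :
    (n : ℝ) / 2 ≤
      ((Finset.univ.filter (fun i : Fin n => 1 - 1 / t < α i)).card : ℝ) ∧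
    ∃ i : Fin n, 1 - 1 / t < α i := by
  classical
  set f : ℕ → ℝ := fun k => (μ (⋂ (j : Fin n) (_ : (j : ℕ) < k), Γ j)).toReal with hfdef
  -- ε ≤ f k for all k
  have hεle : ∀ k : ℕ, ε ≤ f k := by
    intro k
    rw [hε]
    apply ENNReal.toReal_mono (measure_ne_top μ _)
    apply measure_mono
    intro x hx
    simp only [Set.mem_iInter] at hx ⊢
    intro j _
    exact hx j
  have hfpos : ∀ k : ℕ, 0 < f k := fun k => lt_of_lt_of_le hεpos (hεle k)
  have hf0 : f 0 = 1 := by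
    simp only [hfdef, Nat.not_lt_zero, Set.iInter_of_empty, Set.iInter_univ,
      measure_univ, ENNReal.toReal_one]
  have hfn : f n = ε := by
    have hset : (⋂ (j : Fin n) (_ : (j : ℕ) < n), Γ j) = ⋂ j : Fin n, Γ j := by
      ext x
      simp only [Set.mem_iInter]
      exact ⟨fun h j => h j j.isLt, fun h j _ => h j⟩
    simp only [hfdef]
    rw [hset, hε]
  have hfmono : ∀ k : ℕ, f (k + 1) ≤ f k := by
    intro k
    apply ENNReal.toReal_mono (measure_ne_top μ _)
    apply measure_mono
    intro x hx
    simp only [Set.mem_iInter] at hx ⊢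
    intro j hj
    exact hx j (Nat.lt_succ_of_lt hj)
  have hα' : ∀ i : Fin n, α i = f ((i : ℕ) + 1) / f (i : ℕ) := by
    intro i
    have hset : Γ i ∩ (⋂ (j : Fin n) (_ : (j : ℕ) < (i : ℕ)), Γ j)
        = ⋂ (j : Fin n) (_ : (j : ℕ) < (i : ℕ) + 1), Γ j := by
      ext x
      simp only [Set.mem_inter_iff, Set.mem_iInter]
      constructor
      · rintro ⟨h1, h2⟩ j hj
        rcases Nat.lt_succ_iff_lt_or_eq.mp hj with h | h
        · exact h2 j h
        · have : j = i := Fin.ext h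
          subst this; exact h1
      · intro h
        exact ⟨h i (Nat.lt_succ_self _), fun j hj => h j (Nat.lt_succ_of_lt hj)⟩
    rw [hα i, hset]
  have hαpos : ∀ i : Fin n, 0 < α i := by
    intro i
    rw [hα' i]
    exact div_pos (hfpos _) (hfpos _)
  have hαle1 : ∀ i : Fin n, α i ≤ 1 := by
    intro i
    rw [hα' i, div_le_one (hfpos _)]
    exact hfmono _
  -- telescoping product
  have hprod : ∀ m : ℕ, ∏ k ∈ Finset.range m, f (k + 1) / f k = f m := by
    intro m
    induction m with
    | zero => simp [hf0]
    | succ m ih =>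
      rw [Finset.prod_range_succ, ih, mul_div_cancel₀ _ (ne_of_gt (hfpos m))]
  have hεprod : ε = ∏ i : Fin n, α i := by
    have : ∏ i : Fin n, α i = ∏ k ∈ Finset.range n, f (k + 1) / f k := by
      rw [← Fin.prod_univ_eq_prod_range (fun k => f (k + 1) / f k) n]
      exact Finset.prod_congr rfl fun i _ => hα' i
    rw [this, hprod, hfn]
  by_cases htle : t ≤ 1
  · -- every index is good
    have hall : ∀ i : Fin n, 1 - 1 / t < α i := by
      intro i
      have : 1 ≤ 1 / t := one_le_one_div ht htle
      linarith [hαpos i]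
    have hcard : (Finset.univ.filter (fun i : Fin n => 1 - 1 / t < α i)).card = n := by
      rw [Finset.filter_true_of_mem (fun i _ => hall i), Finset.card_univ, Fintype.card_fin]
    constructor
    · rw [hcard]
      have : (0:ℝ) ≤ n := Nat.cast_nonneg n
      linarith
    · exact ⟨⟨0, hn⟩, hall _⟩
  · push_neg at htle
    have h1t0 : 0 < 1 - 1 / t := by
      have : 1 / t < 1 := by
        rw [div_lt_one ht]; exact htle
      linarith
    set B := Finset.univ.filter (fun i : Fin n => ¬ (1 - 1 / t < α i)) with hB
    set G := Finset.univ.filter (fun i : Fin n => 1 - 1 / t < α i) with hG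
    have hcardsum : G.card + B.card = n := by
      rw [hG, hB, Finset.card_filter_add_card_filter_not, Finset.card_univ,
        Fintype.card_fin]
    -- ε ≤ (1 - 1/t)^B.card
    have hεB : ε ≤ (1 - 1 / t) ^ B.card := by
      have hsplit : (∏ i ∈ G, α i) * ∏ i ∈ B, α i = ∏ i : Fin n, α i :=
        Finset.prod_filter_mul_prod_filter_not Finset.univ _ α
    -- ∏ over G ≤ 1
      have hG1 : ∏ i ∈ G, α i ≤ 1 :=
        Finset.prod_le_one (fun i _ => le_of_lt (hαpos i)) (fun i _ => hαle1 i)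
      have hBpos : 0 < ∏ i ∈ B, α i := Finset.prod_pos (fun i _ => hαpos i)
      have h1 : ε ≤ ∏ i ∈ B, α i := by
        rw [hεprod, ← hsplit]
        nlinarith
      have h2 : ∏ i ∈ B, α i ≤ (1 - 1 / t) ^ B.card := by
        rw [← Finset.prod_const]
        apply Finset.prod_le_prod (fun i _ => le_of_lt (hαpos i))
        intro i hi
        rw [hB, Finset.mem_filter] at hi
        linarith [hi.2]
      linarith
    -- take logs
    have hlog : Real.log ε ≤ (B.card : ℝ) * Real.log (1 - 1 / t) := by
      calc Real.log ε ≤ Real.log ((1 - 1 / t) ^ B.card) := Real.log_le_log hεpos hεB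
        _ = (B.card : ℝ) * Real.log (1 - 1 / t) := by rw [Real.log_pow]
    have hlog2 : Real.log (1 - 1 / t) ≤ - (1 / t) := by
      have := Real.log_le_sub_one_of_pos h1t0
      linarith
    have hBbound : (B.card : ℝ) ≤ t * Real.log (1 / ε) := by
      have h1 : Real.log ε ≤ (B.card : ℝ) * (- (1 / t)) := by
        calc Real.log ε ≤ (B.card : ℝ) * Real.log (1 - 1 / t) := hlog
          _ ≤ (B.card : ℝ) * (- (1 / t)) :=
            mul_le_mul_of_nonneg_left hlog2 (Nat.cast_nonneg _)
      have hloginv : Real.log (1 / ε) = - Real.log ε := by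
        rw [one_div, Real.log_inv]
      rw [hloginv]
      have ht' : t ≠ 0 := ne_of_gt ht
      have := mul_le_mul_of_nonneg_left h1 (le_of_lt ht)
      have h2 : t * ((B.card : ℝ) * (-(1 / t))) = -(B.card : ℝ) := by
        field_simp
      rw [h2] at this
      linarith
    have hBlt : (B.card : ℝ) < (n : ℝ) / 2 := by linarith
    have hGcard : (G.card : ℝ) = (n : ℝ) - (B.card : ℝ) := by
      have := hcardsum
      push_cast [← this]
      ring
    have hGge : (n : ℝ) / 2 ≤ (G.card : ℝ) := by linarith
    refine ⟨hGge, ?_⟩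
    have hGpos : 0 < G.card := by
      have hn' : (1:ℝ) ≤ (n:ℝ) := by exact_mod_cast hn
      have : (0:ℝ) < (G.card : ℝ) := by linarith
      exact_mod_cast this
    obtain ⟨i, hi⟩ := Finset.card_pos.mp hGpos
    rw [hG, Finset.mem_filter] at hi
    exact ⟨i, hi.2⟩
end
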